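/- Suppose 1 > α_cs/α_ls > β_cs/β_ls, and let Θ_c = α_sa(1 - α_cs/α_ls)/(β_ls(α_cs/α_ls - β_cs/β_ls)) > 0. Then 𝒩₁(Θ) > 𝒩₂(Θ) for all 0 < Θ < Θ_c, and 𝒩₁(Θ) < 𝒩₂(Θ) for all Θ > Θ_c. -/

import Mathlib

lemma stmt17_helper (η₁ ξ₁ η₂ ξ₂ ρ Θ : ℝ) (hρ : 0 < ρ) (hΘ : 0 < Θ)
    (hξ₁ : 0 < ξ₁) (hξ₂ : 0 < ξ₂)
    (hkey : η₂ * (1 + ξ₁ * Θ) < η₁ * (1 + ξ₂ * Θ)) :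
    Θ / ρ + Θ * η₂ / (ρ * (1 + ξ₂ * Θ)) < Θ / ρ + Θ * η₁ / (ρ * (1 + ξ₁ * Θ)) := by
  apply add_lt_add_right
  have h1 : 0 < ρ * (1 + ξ₁ * Θ) := by positivity
  have h2 : 0 < ρ * (1 + ξ₂ * Θ) := by positivity
  rw [div_lt_div_iff₀ h2 h1]
  nlinarith [mul_pos hΘ hρ, mul_pos (mul_pos hΘ hρ) (mul_pos hξ₁ hξ₂)]

theorem stmt17_switch_d
    (asa aas aal alc als acs bls bcs ρ : ℝ)
    (hasa : 0 < asa) (haas : 0 < aas) (haal : 0 < aal) (halc : 0 < alc)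
    (hals : 0 < als) (hacs : 0 < acs) (hbls : 0 < bls) (hbcs : 0 < bcs)
    (hρ : 0 < ρ) (hρ1 : ρ < 1)
    (hcond1 : acs / als < 1) (hcond2 : bcs / bls < acs / als) :
    let η₁ := 1 / ((asa / (aas + aal)) * (1 + aal / als))
    let ξ₁ := (aal * bls / (als * (aas + aal))) * (1 / ((asa / (aas + aal)) * (1 + aal / als)))
    let D := 1 + aal / (als + alc) + aal * alc / ((als + alc) * acs)
    let η₂ := (aas + aal) / (asa * D)
    let ξ₂ := (bls * aal / (alc + als) + bcs * aal * alc / (acs * (alc + als))) / (asa * D)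
    let N₁ := fun Θ : ℝ => Θ / ρ + Θ * η₁ / (ρ * (1 + ξ₁ * Θ))
    let N₂ := fun Θ : ℝ => Θ / ρ + Θ * η₂ / (ρ * (1 + ξ₂ * Θ))
    0 < asa * (1 - acs / als) / (bls * (acs / als - bcs / bls)) ∧
    (∀ Θ : ℝ, 0 < Θ → Θ < asa * (1 - acs / als) / (bls * (acs / als - bcs / bls)) → N₂ Θ < N₁ Θ) ∧
    (∀ Θ : ℝ, asa * (1 - acs / als) / (bls * (acs / als - bcs / bls)) < Θ → N₁ Θ < N₂ Θ) := by
  intro η₁ ξ₁ D η₂ ξ₂ N₁ N₂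
  have hsum : 0 < aas + aal := by linarith
  have halsalc : 0 < als + alc := by linarith
  have hD : 0 < D := by
    have : 0 < aal / (als + alc) := by positivity
    have : 0 < aal * alc / ((als + alc) * acs) := by positivity
    simp only [D]; linarith
  have hsub1 : acs < als := by
    rwa [div_lt_one hals] at hcond1
  have hsub2 : als * bcs < acs * bls := by
    rw [div_lt_div_iff₀ hbls hals] at hcond2
    linarith
  -- critical value
  set Θc := asa * (1 - acs / als) / (bls * (acs / als - bcs / bls)) with hΘc
  have hΘcpos : 0 < Θc := by
    apply div_pos
    · apply mul_pos hasa; linarith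
    · apply mul_pos hbls
      rw [div_lt_div_iff₀ hbls hals] at hcond2
      rw [sub_pos, div_lt_div_iff₀ hbls hals]
      linarith
  have hη₁ : 0 < η₁ := by
    have : 0 < (asa / (aas + aal)) * (1 + aal / als) := by positivity
    simp only [η₁]; positivity
  have hη₂ : 0 < η₂ := by simp only [η₂]; positivity
  have hξ₁ : 0 < ξ₁ := by
    have : 0 < (asa / (aas + aal)) * (1 + aal / als) := by positivity
    simp only [ξ₁]; positivity
  have hξ₂ : 0 < ξ₂ := by
    have h1 : 0 < bls * aal / (alc + als) := by positivity
    have h2 : 0 < bcs * aal * alc / (acs * (alc + als)) := by positivity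
    have h3 : 0 < asa * D := by positivity
    simp only [ξ₂]; positivity
  -- B > 0
  have hBform : η₂ * ξ₁ - η₁ * ξ₂ =
      (aas + aal) * aal * alc * (acs * bls - als * bcs) /
        ((asa * (1 + aal / als)) * (asa * D) * als * (alc + als) * acs) := by
    have h1 : (1 : ℝ) + aal / als > 0 := by positivity
    simp only [η₁, η₂, ξ₁, ξ₂, D]
    field_simp
    ring
  have hB : 0 < η₂ * ξ₁ - η₁ * ξ₂ := by
    rw [hBform]
    have h1 : (0:ℝ) < 1 + aal / als := by positivity
    have : 0 < acs * bls - als * bcs := by linarith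
    positivity
  -- A = Θc * B
  have hAform : η₁ - η₂ = Θc * (η₂ * ξ₁ - η₁ * ξ₂) := by
    rw [hBform, hΘc]
    have h1 : (0:ℝ) < 1 + aal / als := by positivity
    have h2 : 0 < acs * bls - als * bcs := by linarith
    have h3 : bls * (acs / als - bcs / bls) ≠ 0 := by
      have : 0 < acs / als - bcs / bls := by
        rw [sub_pos, div_lt_div_iff₀ hbls hals]; linarith
      positivity
    simp only [η₁, η₂, D]
    field_simp
    ring
  clear_value η₁ ξ₁ η₂ ξ₂ D
  clear hBform
  refine ⟨hΘcpos, ?_, ?_⟩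
  · intro Θ hΘ hΘlt
    simp only [N₁, N₂]
    apply stmt17_helper η₁ ξ₁ η₂ ξ₂ ρ Θ hρ hΘ hξ₁ hξ₂
    have h1 := mul_lt_mul_of_pos_right hΘlt hB
    have h2 : η₂ * (1 + ξ₁ * Θ) - η₁ * (1 + ξ₂ * Θ)
        = (Θ * (η₂ * ξ₁ - η₁ * ξ₂) - Θc * (η₂ * ξ₁ - η₁ * ξ₂))
          - ((η₁ - η₂) - Θc * (η₂ * ξ₁ - η₁ * ξ₂)) := by ring
    linarith [hAform, h1, h2]
  · intro Θ hΘgt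
    have hΘ : 0 < Θ := lt_trans hΘcpos hΘgt
    simp only [N₁, N₂]
    apply stmt17_helper η₂ ξ₂ η₁ ξ₁ ρ Θ hρ hΘ hξ₂ hξ₁
    have h1 := mul_lt_mul_of_pos_right hΘgt hB
    have h2 : η₁ * (1 + ξ₂ * Θ) - η₂ * (1 + ξ₁ * Θ)
        = ((η₁ - η₂) - Θc * (η₂ * ξ₁ - η₁ * ξ₂))
          - (Θ * (η₂ * ξ₁ - η₁ * ξ₂) - Θc * (η₂ * ξ₁ - η₁ * ξ₂)) := by ring
    linarith [hAform, h1, h2]
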